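/- Let T ∈ A ⊗ B ⊗ C (finite-dimensional complex vector spaces) be such that for every α ∈ A* the induced linear map T(α) : B* → C has rank at most r, and let T' ∈ ℂ^m ⊗ ℂ^m ⊗ ℂ^m be concise and of minimal border rank, i.e., T' lies in the closure of the set of tensors of rank at most m. Then for every ψ ∈ (A ⊗ A')*, the slice (T ⊠ T')(ψ) : (B ⊗ B')* → C ⊗ C' of the Kronecker product T ⊠ T' ∈ (A⊗A') ⊗ (B⊗B') ⊗ (C⊗C') has rank at most rm. -/

import Mathlib

open Matrix

/-- A three-way tensor in `ℂ^a ⊗ ℂ^b ⊗ ℂ^c`, in coordinates. -/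
abbrev Tensor3 (a b c : ℕ) := Fin a → Fin b → Fin c → ℂ

/-- The set of tensors of rank at most `r` in `ℂ^a ⊗ ℂ^b ⊗ ℂ^c`. -/
def rankLE (a b c r : ℕ) : Set (Tensor3 a b c) :=
  {T | ∃ (u : Fin r → Fin a → ℂ) (v : Fin r → Fin b → ℂ) (w : Fin r → Fin c → ℂ),
    T = fun i j k => ∑ s, u s i * v s j * w s k}

/-- The tensorSlice `T(α) : B^* → C` of a tensor, as a matrix. -/
noncomputable def tensorSlice {a b c : ℕ} (T : Tensor3 a b c) (α : Fin a → ℂ) : Matrix (Fin b) (Fin c) ℂ :=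
  Matrix.of fun j k => ∑ i, α i * T i j k

set_option linter.unusedSectionVars false

section Aux

variable {n p q s : Type*} [Fintype n] [Fintype p] [Fintype q] [Fintype s]

lemma myrank_add_le (A B : Matrix n p ℂ) : (A + B).rank ≤ A.rank + B.rank := by
  classical
  rw [Matrix.rank, Matrix.rank, Matrix.rank, Matrix.mulVecLin_add]
  have h : LinearMap.range (A.mulVecLin + B.mulVecLin) ≤
      LinearMap.range A.mulVecLin ⊔ LinearMap.range B.mulVecLin := by
    rintro x ⟨y, rfl⟩
    exact Submodule.mem_sup.2 ⟨_, ⟨y, rfl⟩, _, ⟨y, rfl⟩, rfl⟩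
  exact (Submodule.finrank_mono h).trans
    (Submodule.finrank_add_le_finrank_add_finrank _ _)

lemma myrank_sum_le {ι : Type*} (t : Finset ι) (A : ι → Matrix n p ℂ) :
    (∑ i ∈ t, A i).rank ≤ ∑ i ∈ t, (A i).rank := by
  classical
  induction t using Finset.cons_induction with
  | empty => simp
  | cons i t hi ih =>
    rw [Finset.sum_cons, Finset.sum_cons]
    exact (myrank_add_le _ _).trans (by gcongr)

lemma myrank_submatrix_le [DecidableEq n] [DecidableEq p]
    (M : Matrix n p ℂ) (f : q → n) (g : s → p) :
    (M.submatrix f g).rank ≤ M.rank := by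
  have h : M.submatrix f g =
      ((Matrix.of fun i j => if j = f i then (1 : ℂ) else 0) * M) *
        (Matrix.of fun j l => if j = g l then (1 : ℂ) else 0) := by
    ext i l
    simp [Matrix.mul_apply, ite_mul, mul_ite, Finset.sum_ite_eq']
  rw [h]
  exact (Matrix.rank_mul_le_left _ _).trans (Matrix.rank_mul_le_right _ _)

lemma exists_linearIndependent_rows [DecidableEq n]
    (M : Matrix n p ℂ) (k : ℕ) (hk : k ≤ M.rank) :
    ∃ f : Fin k → n, LinearIndependent ℂ (fun i => M (f i)) := by
  classical
  obtain ⟨b, hb, hspan, hli⟩ := exists_linearIndependent ℂ (Set.range M)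
  have hfin : b.Finite := (Set.finite_range M).subset hb
  haveI := hfin.fintype
  have hcard : Module.finrank ℂ (Submodule.span ℂ b) = Fintype.card b := by
    simpa [Set.toFinset_card] using finrank_span_set_eq_card hli
  have hkb : k ≤ Fintype.card b := by
    have := M.rank_eq_finrank_span_row
    change M.rank = Module.finrank ℂ (Submodule.span ℂ (Set.range M)) at this
    rw [← hspan] at this
    omega
  obtain ⟨e⟩ := Function.Embedding.nonempty_of_card_le (by simpa using hkb :
    Fintype.card (Fin k) ≤ Fintype.card b)
  have hchoice : ∀ i : Fin k, ∃ j : n, M j = (e i : p → ℂ) := by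
    intro i
    exact hb (e i).2
  choose f hf using hchoice
  refine ⟨f, ?_⟩
  have : (fun i => M (f i)) = (fun x : b => (x : p → ℂ)) ∘ e := by
    funext i; simp [hf i]
  rw [this]
  exact hli.comp e e.injective

end Aux

section Aux2
variable {n p : Type*} [Fintype n] [Fintype p] [DecidableEq n] [DecidableEq p]

lemma det_ne_zero_of_li_rows {k : ℕ} (B : Matrix (Fin k) (Fin k) ℂ)
    (h : LinearIndependent ℂ B) : B.det ≠ 0 := by
  intro h0
  obtain ⟨v, hv, hv0⟩ := (Matrix.exists_vecMul_eq_zero_iff).2 h0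
  have := Fintype.linearIndependent_iff.1 h v ?_
  · exact hv (funext this)
  · funext i
    have := congrFun hv0 i
    simpa [Matrix.vecMul, dotProduct, Finset.sum_apply] using this

lemma myrank_le_of_minors (M : Matrix n p ℂ) (k : ℕ)
    (h : ∀ (f : Fin (k+1) → n) (g : Fin (k+1) → p), (M.submatrix f g).det = 0) :
    M.rank ≤ k := by
  by_contra hlt
  push_neg at hlt
  obtain ⟨f, hf⟩ := exists_linearIndependent_rows M (k+1) hlt
  have hA : LinearIndependent ℂ (M.submatrix f id) := hf
  have hArank : (M.submatrix f id).rank = k + 1 := by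
    exact (by simpa using hA.rank_matrix : (Matrix.of fun i j => M (f i) j).rank = k + 1)
  have hAt : k + 1 ≤ (M.submatrix f id)ᵀ.rank := by
    rw [Matrix.rank_transpose, hArank]
  obtain ⟨g, hg⟩ := exists_linearIndependent_rows (M.submatrix f id)ᵀ (k+1) hAt
  have hB : LinearIndependent ℂ ((M.submatrix f g)ᵀ) := hg
  have := det_ne_zero_of_li_rows _ hB
  rw [Matrix.det_transpose] at this
  exact this (h f g)

lemma isClosed_rank_le (k : ℕ) : IsClosed {M : Matrix n p ℂ | M.rank ≤ k} := by
  have hset : {M : Matrix n p ℂ | M.rank ≤ k} =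
      ⋂ (f : Fin (k+1) → n) (g : Fin (k+1) → p), {M | (M.submatrix f g).det = 0} := by
    ext M
    simp only [Set.mem_setOf_eq, Set.mem_iInter]
    constructor
    · intro hM f g
      by_contra hd
      have hu : IsUnit (M.submatrix f g) :=
        (Matrix.isUnit_iff_isUnit_det _).2 (isUnit_iff_ne_zero.2 hd)
      have h1 : (M.submatrix f g).rank = k + 1 := by
        simpa using Matrix.rank_of_isUnit _ hu
      have h2 := myrank_submatrix_le M f g
      omega
    · exact myrank_le_of_minors M k
  rw [hset]
  exact isClosed_iInter fun f => isClosed_iInter fun g =>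
    isClosed_eq ((continuous_id.matrix_submatrix f g).matrix_det) continuous_const

end Aux2
lemma rank_term_le {b c m : ℕ} (A : Matrix (Fin b) (Fin c) ℂ) (v w : Fin m → ℂ) :
    (Matrix.of fun (p : Fin b × Fin m) (q : Fin c × Fin m) =>
      A p.1 q.1 * v p.2 * w q.2).rank ≤ A.rank := by
  have h : (Matrix.of fun (p : Fin b × Fin m) (q : Fin c × Fin m) =>
      A p.1 q.1 * v p.2 * w q.2) =
      ((Matrix.of fun (p : Fin b × Fin m) (j : Fin b) => if j = p.1 then v p.2 else 0) * A) *
        (Matrix.of fun (k : Fin c) (q : Fin c × Fin m) => if k = q.1 then w q.2 else 0) := by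
    ext p q
    simp [Matrix.mul_apply, ite_mul, mul_ite, Finset.sum_ite_eq']
    exact Or.inl (mul_comm _ _)
  rw [h]
  exact (Matrix.rank_mul_le_left _ _).trans (Matrix.rank_mul_le_right _ _)

lemma slice_rank_of_rankLE {a b c m : ℕ} (r : ℕ) (T : Tensor3 a b c)
    (hT : ∀ α : Fin a → ℂ, (tensorSlice T α).rank ≤ r) (ψ : Fin a × Fin m → ℂ)
    (S : Tensor3 m m m) (hS : S ∈ rankLE m m m m) :
    (Matrix.of fun (p : Fin b × Fin m) (q : Fin c × Fin m) =>
        ∑ x : Fin a × Fin m, ψ x * (T x.1 p.1 q.1 * S x.2 p.2 q.2)).rank ≤ r * m := by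
  obtain ⟨u, v, w, rfl⟩ := hS
  have hdecomp : (Matrix.of fun (p : Fin b × Fin m) (q : Fin c × Fin m) =>
        ∑ x : Fin a × Fin m, ψ x * (T x.1 p.1 q.1 * ∑ s, u s x.2 * v s p.2 * w s q.2)) =
      ∑ s : Fin m, (Matrix.of (fun (p : Fin b × Fin m) (q : Fin c × Fin m) =>
          (tensorSlice T (fun i => ∑ i', ψ (i, i') * u s i')) p.1 q.1 * v s p.2 * w s q.2) :
            Matrix (Fin b × Fin m) (Fin c × Fin m) ℂ) := by
    ext p q
    simp only [Matrix.of_apply, Matrix.sum_apply, tensorSlice, Fintype.sum_prod_type,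
      Finset.mul_sum, Finset.sum_mul]
    refine Eq.trans (Finset.sum_congr rfl fun i _ => Finset.sum_comm) ?_
    refine Eq.trans (Finset.sum_comm) ?_
    refine Finset.sum_congr rfl fun s _ => Finset.sum_congr rfl fun i _ =>
      Finset.sum_congr rfl fun i' _ => ?_
    ring
  rw [hdecomp]
  calc (∑ s : Fin m, (Matrix.of (fun (p : Fin b × Fin m) (q : Fin c × Fin m) =>
          (tensorSlice T (fun i => ∑ i', ψ (i, i') * u s i')) p.1 q.1 * v s p.2 * w s q.2) :
            Matrix (Fin b × Fin m) (Fin c × Fin m) ℂ)).rank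
      ≤ ∑ s : Fin m, (Matrix.of (fun (p : Fin b × Fin m) (q : Fin c × Fin m) =>
          (tensorSlice T (fun i => ∑ i', ψ (i, i') * u s i')) p.1 q.1 * v s p.2 * w s q.2)).rank :=
        myrank_sum_le _ _
    _ ≤ ∑ _s : Fin m, r := Finset.sum_le_sum fun s _ => (rank_term_le _ _ _).trans (hT _)
    _ = r * m := by simp [mul_comm]


/-- If every tensorSlice `T(α)` of `T ∈ A ⊗ B ⊗ C` has rank at most `r` and
`T' ∈ ℂ^m ⊗ ℂ^m ⊗ ℂ^m` is concise of minimal border rank (it lies in the closure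
of the set of tensors of rank at most `m`), then every tensorSlice of the Kronecker
product `T ⊠ T'` has rank at most `r·m`. -/
theorem stmt7 (a b c r m : ℕ)
    (T : Tensor3 a b c)
    (hT : ∀ α : Fin a → ℂ, (tensorSlice T α).rank ≤ r)
    (T' : Tensor3 m m m)
    (hconciseA : Function.Injective fun (α : Fin m → ℂ) => fun (j k : Fin m) => ∑ i, α i * T' i j k)
    (hconciseB : Function.Injective fun (β : Fin m → ℂ) => fun (i k : Fin m) => ∑ j, β j * T' i j k)
    (hconciseC : Function.Injective fun (γ : Fin m → ℂ) => fun (i j : Fin m) => ∑ k, γ k * T' i j k)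
    (hmbr : T' ∈ closure (rankLE m m m m)) :
    ∀ ψ : Fin a × Fin m → ℂ,
      (Matrix.of fun (p : Fin b × Fin m) (q : Fin c × Fin m) =>
        ∑ x : Fin a × Fin m, ψ x * (T x.1 p.1 q.1 * T' x.2 p.2 q.2)).rank ≤ r * m := by
  intro ψ
  have hcont : Continuous (fun S : Tensor3 m m m =>
      (Matrix.of fun (p : Fin b × Fin m) (q : Fin c × Fin m) =>
        ∑ x : Fin a × Fin m, ψ x * (T x.1 p.1 q.1 * S x.2 p.2 q.2))) := by
    refine continuous_pi fun p => continuous_pi fun q => ?_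
    refine continuous_finset_sum _ fun x _ => ?_
    exact continuous_const.mul (continuous_const.mul
      ((continuous_apply q.2).comp ((continuous_apply p.2).comp (continuous_apply x.2))))
  have hmem := map_mem_closure
      (t := {M : Matrix (Fin b × Fin m) (Fin c × Fin m) ℂ | M.rank ≤ r * m})
      hcont hmbr (fun S hS => slice_rank_of_rankLE r T hT ψ S hS)
  exact (isClosed_rank_le (r * m)).closure_subset hmem
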